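/- In a finite perfect-information game satisfying the no-indifference condition, any two pure-strategy subgame-perfect equilibria yield the same payoff vector at the root. -/
import Mathlib


set_option linter.unusedVariables false

/-- A finite game tree with `n` players: each internal node is controlled by a
player in `Fin n` and has `k+1` children; leaves carry a payoff vector. -/
inductive GameTree (n : ℕ) : Type
  | leaf (u : Fin n → ℝ) : GameTree n
  | node (p : Fin n) (k : ℕ) (c : Fin (k + 1) → GameTree n) : GameTree n

/-- A pure strategy profile: a choice of child at every internal node. -/
inductive PureProfile {n : ℕ} : GameTree n → Type
  | leaf {u : Fin n → ℝ} : PureProfile (.leaf u)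
  | node {p : Fin n} {k : ℕ} {c : Fin (k + 1) → GameTree n}
      (ch : Fin (k + 1)) (sub : ∀ j, PureProfile (c j)) :
      PureProfile (.node p k c)

/-- The payoff vector induced by a pure strategy profile. -/
def payoff {n : ℕ} : {t : GameTree n} → PureProfile t → Fin n → ℝ
  | .leaf u, .leaf, i => u i
  | .node _ _ _, .node ch sub, i => payoff (sub ch) i

/-- `Dev i g g'` : `g'` is a unilateral deviation of `g` by player `i`
(they agree at every node not controlled by `i`). -/
def Dev {n : ℕ} (i : Fin n) : {t : GameTree n} → PureProfile t → PureProfile t → Prop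
  | .leaf _, _, _ => True
  | .node p _ _, .node ch sub, .node ch' sub' =>
      (p ≠ i → ch' = ch) ∧ ∀ j, Dev i (sub j) (sub' j)

/-- Subgame-perfect equilibrium for pure profiles: at every node, no player can
strictly improve her payoff in the subgame rooted there by a unilateral deviation. -/
def IsSPE {n : ℕ} : {t : GameTree n} → PureProfile t → Prop
  | .leaf _, _ => True
  | .node p k c, .node ch sub =>
      (∀ j, IsSPE (sub j)) ∧
      ∀ (i : Fin n) (g' : PureProfile (.node p k c)),
        Dev i (.node ch sub) g' →
        payoff g' i ≤ payoff (PureProfile.node (p := p) ch sub) i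

/-- The payoffs of leaves of the game tree. -/
def IsLeafPayoff {n : ℕ} : GameTree n → (Fin n → ℝ) → Prop
  | .leaf u, v => u = v
  | .node _ _ c, v => ∃ j, IsLeafPayoff (c j) v

/-- No-indifference condition: if two leaves give the same payoff to some
player, they give the same payoff to every player. -/
def NoIndifference {n : ℕ} (t : GameTree n) : Prop :=
  ∀ u v, IsLeafPayoff t u → IsLeafPayoff t v → (∃ i, u i = v i) → u = v


lemma dev_refl {n : ℕ} (i : Fin n) : ∀ {t : GameTree n} (g : PureProfile t), Dev i g g
  | .leaf _, _ => by simp [Dev]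
  | .node p k c, .node ch sub => ⟨fun _ => rfl, fun j => dev_refl i (sub j)⟩

lemma payoff_isLeafPayoff {n : ℕ} : ∀ {t : GameTree n} (g : PureProfile t),
    IsLeafPayoff t (payoff g)
  | .leaf u, .leaf => rfl
  | .node p k c, .node ch sub => ⟨ch, payoff_isLeafPayoff (sub ch)⟩

lemma ni_child {n : ℕ} {p : Fin n} {k : ℕ} {c : Fin (k+1) → GameTree n}
    (h : NoIndifference (.node p k c)) (j : Fin (k+1)) : NoIndifference (c j) :=
  fun u v hu hv he => h u v ⟨j, hu⟩ ⟨j, hv⟩ he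

lemma spe_payoff_eq {n : ℕ} : ∀ {t : GameTree n}, NoIndifference t →
    ∀ (g g' : PureProfile t), IsSPE g → IsSPE g' → payoff g = payoff g'
  | .leaf u, _, .leaf, .leaf, _, _ => rfl
  | .node p k c, hni, .node ch sub, .node ch' sub', hg, hg' => by
    obtain ⟨h1, h2⟩ := hg
    obtain ⟨h1', h2'⟩ := hg'
    have ih : ∀ j (a b : PureProfile (c j)), IsSPE a → IsSPE b → payoff a = payoff b :=
      fun j a b ha hb => spe_payoff_eq (ni_child hni j) a b ha hb
    have e1 : payoff (sub ch') = payoff (sub' ch') := ih ch' _ _ (h1 ch') (h1' ch')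
    have e2 : payoff (sub' ch) = payoff (sub ch) := ih ch _ _ (h1' ch) (h1 ch)
    have d1 : payoff (sub ch') p ≤ payoff (sub ch) p :=
      h2 p (.node ch' sub) ⟨fun h => absurd rfl h, fun j => dev_refl p (sub j)⟩
    have d2 : payoff (sub' ch) p ≤ payoff (sub' ch') p :=
      h2' p (.node ch sub') ⟨fun h => absurd rfl h, fun j => dev_refl p (sub' j)⟩
    have eqp : payoff (sub ch) p = payoff (sub' ch') p :=
      le_antisymm (e2 ▸ d2) (e1 ▸ d1)
    have := hni (payoff (sub ch)) (payoff (sub' ch'))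
      ⟨ch, payoff_isLeafPayoff (sub ch)⟩ ⟨ch', payoff_isLeafPayoff (sub' ch')⟩ ⟨p, eqp⟩
    funext i
    exact congrFun this i

theorem stmt4 {n : ℕ} (t : GameTree n) (hni : NoIndifference t)
    (g g' : PureProfile t) (hg : IsSPE g) (hg' : IsSPE g') :
    ∀ i, payoff g i = payoff g' i := fun i => congrFun (spe_payoff_eq hni g g' hg hg') i
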